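/- (Hsia's criterion) Let F ⊆ C_K[z] be a family of polynomials, let U = D̄_r(c) be a closed disk (r > 0), and suppose there is a point y ∈ C_K such that f(x) ≠ y for all f ∈ F and all x ∈ U. Then the family F is equicontinuous with respect to the spherical metric Δ at every point of U. -/

import Mathlib

open IsUltrametricDist

/-- If `‖u‖ < ‖v‖` then `‖u + v‖ = ‖v‖` in an ultrametric field. -/
lemma hsia_norm_add_eq {K : Type*} [NormedField K] [IsUltrametricDist K]
    {u v : K} (h : ‖u‖ < ‖v‖) : ‖u + v‖ = ‖v‖ := by
  rw [norm_add_eq_max_of_norm_ne_norm (ne_of_lt h), max_eq_right h.le]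

/-- Key multiset product estimate. -/
lemma hsia_key {K : Type*} [NormedField K] [IsUltrametricDist K]
    (x x₀ : K) (r : ℝ) (hr : 0 < r) (hx : ‖x - x₀‖ ≤ r) (s : Multiset K)
    (hs : ∀ α ∈ s, r < ‖x₀ - α‖) :
    ‖(s.map (fun α => x - α)).prod - (s.map (fun α => x₀ - α)).prod‖ ≤
      ‖x - x₀‖ / r * ‖(s.map (fun α => x₀ - α)).prod‖ := by
  induction s using Multiset.induction_on with
  | empty =>
      simp only [Multiset.map_zero, Multiset.prod_zero, sub_self, norm_zero]
      positivity
  | cons α t ih =>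
      have hα : r < ‖x₀ - α‖ := hs α (Multiset.mem_cons_self α t)
      have ih' := ih (fun β hβ => hs β (Multiset.mem_cons_of_mem hβ))
      simp only [Multiset.map_cons, Multiset.prod_cons]
      set P := (t.map (fun α => x - α)).prod
      set Q := (t.map (fun α => x₀ - α)).prod
      have hxα : ‖x - α‖ = ‖x₀ - α‖ := by
        have : x - α = (x - x₀) + (x₀ - α) := by ring
        rw [this, hsia_norm_add_eq (lt_of_le_of_lt hx hα)]
      have hid : (x - α) * P - (x₀ - α) * Q = (x - α) * (P - Q) + (x - x₀) * Q := by
        ring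
      have hd : (0:ℝ) ≤ ‖x - x₀‖ / r := by positivity
      have hQ : (0:ℝ) ≤ ‖Q‖ := norm_nonneg _
      have h1 : ‖(x - α) * (P - Q)‖ ≤ ‖x - x₀‖ / r * (‖x₀ - α‖ * ‖Q‖) := by
        rw [norm_mul, hxα]
        calc ‖x₀ - α‖ * ‖P - Q‖ ≤ ‖x₀ - α‖ * (‖x - x₀‖ / r * ‖Q‖) := by
              exact mul_le_mul_of_nonneg_left ih' (norm_nonneg _)
          _ = ‖x - x₀‖ / r * (‖x₀ - α‖ * ‖Q‖) := by ring
      have h2 : ‖(x - x₀) * Q‖ ≤ ‖x - x₀‖ / r * (‖x₀ - α‖ * ‖Q‖) := by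
        rw [norm_mul]
        have : ‖x - x₀‖ ≤ ‖x - x₀‖ / r * ‖x₀ - α‖ := by
          have := mul_le_mul_of_nonneg_left hα.le hd
          calc ‖x - x₀‖ = ‖x - x₀‖ / r * r := by field_simp
            _ ≤ ‖x - x₀‖ / r * ‖x₀ - α‖ := this
        calc ‖x - x₀‖ * ‖Q‖ ≤ (‖x - x₀‖ / r * ‖x₀ - α‖) * ‖Q‖ :=
              mul_le_mul_of_nonneg_right this hQ
          _ = ‖x - x₀‖ / r * (‖x₀ - α‖ * ‖Q‖) := by ring
      calc ‖(x - α) * P - (x₀ - α) * Q‖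
          = ‖(x - α) * (P - Q) + (x - x₀) * Q‖ := by rw [hid]
        _ ≤ max ‖(x - α) * (P - Q)‖ ‖(x - x₀) * Q‖ := norm_add_le_max _ _
        _ ≤ ‖x - x₀‖ / r * (‖x₀ - α‖ * ‖Q‖) := max_le h1 h2
        _ = ‖x - x₀‖ / r * ‖(x₀ - α) * Q‖ := by rw [norm_mul]

/-- Key polynomial estimate: a polynomial with no roots near `x₀` is Lipschitz there. -/
lemma hsia_poly {K : Type*} [NontriviallyNormedField K] [IsUltrametricDist K]
    [CompleteSpace K] [IsAlgClosed K]
    (g : Polynomial K) (x₀ : K) (r : ℝ) (hr : 0 < r)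
    (hroots : ∀ z : K, g.eval z = 0 → r < ‖x₀ - z‖)
    (x : K) (hx : ‖x - x₀‖ ≤ r) :
    ‖g.eval x - g.eval x₀‖ ≤ ‖x - x₀‖ / r * ‖g.eval x₀‖ := by
  have hfac := Polynomial.Splits.eq_prod_roots (IsAlgClosed.splits g)
  have heval : ∀ z : K, g.eval z =
      g.leadingCoeff * ((g.roots.map (fun α => z - α)).prod) := by
    intro z
    conv_lhs => rw [hfac]
    simp [Polynomial.eval_multiset_prod, Multiset.map_map, Function.comp]
  have hmem : ∀ α ∈ g.roots, r < ‖x₀ - α‖ := by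
    intro α hα
    exact hroots α (Polynomial.isRoot_of_mem_roots hα)
  have key := hsia_key x x₀ r hr hx g.roots hmem
  rw [heval x, heval x₀, ← mul_sub, norm_mul, norm_mul]
  calc ‖g.leadingCoeff‖ * ‖(g.roots.map (fun α => x - α)).prod -
          (g.roots.map (fun α => x₀ - α)).prod‖
      ≤ ‖g.leadingCoeff‖ * (‖x - x₀‖ / r * ‖(g.roots.map (fun α => x₀ - α)).prod‖) :=
        mul_le_mul_of_nonneg_left key (norm_nonneg _)
    _ = ‖x - x₀‖ / r * (‖g.leadingCoeff‖ * ‖(g.roots.map (fun α => x₀ - α)).prod‖) := by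
        ring

/-- The spherical metric `Δ(x,y) = |x - y| / (max(|x|,1) · max(|y|,1))`. -/
noncomputable def sphMetric {K : Type*} [NormedField K] (x y : K) : ℝ :=
  ‖x - y‖ / (max ‖x‖ 1 * max ‖y‖ 1)

/-- Hsia's criterion: a family of polynomials omitting a common value `y` on a
closed disk `U` is equicontinuous (w.r.t. the spherical metric) at every point of `U`. -/
theorem hsia_criterion
    {K : Type*} [NontriviallyNormedField K] [IsUltrametricDist K]
    [CompleteSpace K] [IsAlgClosed K]
    (F : Set (Polynomial K)) (c : K) (r : ℝ) (hr : 0 < r) (y : K)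
    (h : ∀ f ∈ F, ∀ x ∈ Metric.closedBall c r, f.eval x ≠ y) :
    ∀ x₀ ∈ Metric.closedBall c r, ∀ e : ℝ, 0 < e → ∃ δ : ℝ, 0 < δ ∧
      ∀ f ∈ F, ∀ x : K, ‖x - x₀‖ < δ → sphMetric (f.eval x) (f.eval x₀) < e := by
  intro x₀ hx₀ e he
  set M : ℝ := max ‖y‖ 1 with hMdef
  have hM1 : (1:ℝ) ≤ M := le_max_right _ _
  have hM : (0:ℝ) < M := lt_of_lt_of_le one_pos hM1
  refine ⟨min r (e * r / M), lt_min hr (by positivity), ?_⟩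
  intro f hf x hxd
  have hdr : ‖x - x₀‖ ≤ r := le_of_lt (lt_of_lt_of_le hxd (min_le_left _ _))
  set g : Polynomial K := f - Polynomial.C y with hgdef
  have hgev : ∀ z : K, g.eval z = f.eval z - y := by intro z; simp [hgdef]
  have hroots : ∀ z : K, g.eval z = 0 → r < ‖x₀ - z‖ := by
    intro z hz
    by_contra hle
    push_neg at hle
    have hzmem : z ∈ Metric.closedBall c r := by
      rw [Metric.mem_closedBall, dist_eq_norm]
      have : z - c = (z - x₀) + (x₀ - c) := by ring
      rw [this]
      refine le_trans (norm_add_le_max _ _) (max_le ?_ ?_)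
      · rwa [norm_sub_rev]
      · rw [← dist_eq_norm]; exact Metric.mem_closedBall.mp hx₀
    exact h f hf z hzmem (by rwa [← sub_eq_zero, ← hgev])
  have key := hsia_poly g x₀ r hr hroots x hdr
  have hfg : f.eval x - f.eval x₀ = g.eval x - g.eval x₀ := by
    rw [hgev, hgev]; ring
  set A : ℝ := max ‖f.eval x‖ 1
  set B : ℝ := max ‖f.eval x₀‖ 1
  have hA1 : (1:ℝ) ≤ A := le_max_right _ _
  have hB1 : (1:ℝ) ≤ B := le_max_right _ _
  have hA : (0:ℝ) < A := lt_of_lt_of_le one_pos hA1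
  have hB : (0:ℝ) < B := lt_of_lt_of_le one_pos hB1
  have hgx₀ : ‖g.eval x₀‖ ≤ B * M := by
    rw [hgev, sub_eq_add_neg]
    refine le_trans (norm_add_le_max _ _) ?_
    rw [norm_neg]
    refine max_le ?_ ?_
    · calc ‖f.eval x₀‖ ≤ B := le_max_left _ _
        _ = B * 1 := (mul_one B).symm
        _ ≤ B * M := by nlinarith
    · calc ‖y‖ ≤ M := le_max_left _ _
        _ = 1 * M := (one_mul M).symm
        _ ≤ B * M := by nlinarith
  have hd0 : (0:ℝ) ≤ ‖x - x₀‖ / r := by positivity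
  have hstep : sphMetric (f.eval x) (f.eval x₀) ≤ ‖x - x₀‖ / r * M := by
    rw [sphMetric, div_le_iff₀ (by positivity)]
    calc ‖f.eval x - f.eval x₀‖ = ‖g.eval x - g.eval x₀‖ := by rw [hfg]
      _ ≤ ‖x - x₀‖ / r * ‖g.eval x₀‖ := key
      _ ≤ ‖x - x₀‖ / r * (B * M) := mul_le_mul_of_nonneg_left hgx₀ hd0
      _ ≤ ‖x - x₀‖ / r * M * (A * B) := by
          nlinarith [mul_nonneg (mul_nonneg (mul_nonneg hd0 hM.le) hB.le)
            (sub_nonneg.mpr hA1)]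
  refine lt_of_le_of_lt hstep ?_
  have hxd' : ‖x - x₀‖ < e * r / M := lt_of_lt_of_le hxd (min_le_right _ _)
  rw [div_mul_eq_mul_div, div_lt_iff₀ hr]
  calc ‖x - x₀‖ * M < (e * r / M) * M := mul_lt_mul_of_pos_right hxd' hM
    _ = e * r := by field_simp
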